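/- Let q = p^r be a power of an odd prime p, n an odd positive integer, k = 𝔽_{q²} and l = 𝔽_{q^{2n}}, so l/k has degree n. With bar the q-power Frobenius, m_β the multiplication matrix of β ∈ l in a fixed k-basis of l, and α ∈ l^× with l = k(α) and α^{q^n} = α^{-1}, for each ε = ±1 the set Ξ_ε(α) = {X ∈ M_n(k) : m_α·X·ᵗ(m̄_α) = X and ᵗX̄ = ε·X} has exactly q^n elements. -/

import Mathlib

open Matrix

lemma pow_q_odd {R : Type*} [Monoid R] (a : R) (q : ℕ) (h : a ^ q ^ 2 = a)
    {n : ℕ} (hn : Odd n) : a ^ q ^ n = a ^ q := by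
  obtain ⟨m, rfl⟩ := hn
  induction m with
  | zero => simp
  | succ m ih =>
    have h2 : q ^ (2 * (m + 1) + 1) = q ^ 2 * q ^ (2 * m + 1) := by ring
    rw [h2, pow_mul, h, ih]

lemma card_eigen_sq {K V : Type*} [Field K] [AddCommGroup V] [Module K V]
    (W : Submodule K V) (σ : V → V) (hadd : ∀ x y, σ (x + y) = σ x + σ y)
    (q : ℕ) (hsmul : ∀ (c : K) (x : V), σ (c • x) = c ^ q • σ x) (hσσ : ∀ x, σ (σ x) = x)
    (hW : ∀ x ∈ W, σ x ∈ W)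
    (ε ω : K) (hε : ε = 1 ∨ ε = -1) (hm1q : (-1 : K) ^ q = -1)
    (hω0 : ω ≠ 0) (hωq : ω ^ q = -ω)
    (h2 : (2 : K) ≠ 0) (h2q : (2 : K) ^ q = 2) :
    Nat.card {x : V // x ∈ W ∧ σ x = ε • x} ^ 2 = Nat.card W := by
  have hsub : ∀ x y, σ (x - y) = σ x - σ y := by
    intro x y
    have h := hadd (x - y) y
    rw [sub_add_cancel] at h
    rw [eq_sub_iff_add_eq, ← h]
  have hc : (2:K)⁻¹ ^ q = (2:K)⁻¹ := by rw [inv_pow, h2q]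
  have hωinvq : (ω⁻¹ : K) ^ q = -ω⁻¹ := by rw [inv_pow, hωq, ← neg_inv]
  have hεq : ε ^ q = ε := by rcases hε with rfl | rfl <;> simp [hm1q]
  have hε2 : ε * ε = 1 := by rcases hε with rfl | rfl <;> norm_num
  have key : Function.Bijective (fun P : {x : V // x ∈ W ∧ σ x = ε • x} ×
      {x : V // x ∈ W ∧ σ x = ε • x} =>
      (⟨P.1.1 + ω • P.2.1, W.add_mem P.1.2.1 (W.smul_mem ω P.2.2.1)⟩ : W)) := by
    constructor
    · rintro ⟨⟨x, hxW, hx⟩, ⟨y, hyW, hy⟩⟩ ⟨⟨x', hx'W, hx'⟩, ⟨y', hy'W, hy'⟩⟩ hF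
      have h1 : x + ω • y = x' + ω • y' := congrArg Subtype.val hF
      have h3 := congrArg σ h1
      rw [hadd, hadd, hsmul, hsmul, hωq, hx, hy, hx', hy'] at h3
      have hx2 : (2:K) • x = (2:K) • x' := by
        rcases hε with rfl | rfl
        · simp only [one_smul] at h3
          linear_combination (norm := module) h1 + h3
        · simp only [neg_smul, one_smul, smul_neg] at h3
          linear_combination (norm := module) h1 - h3
      have hxx : x = x' := smul_right_injective V h2 hx2
      subst hxx
      have hy2 : ω • y = ω • y' := by rwa [add_right_inj] at h1
      have hyy : y = y' := smul_right_injective V hω0 hy2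
      subst hyy
      rfl
    · rintro ⟨z, hzW⟩
      have hσz := hW z hzW
      refine ⟨(⟨(2:K)⁻¹ • (z + ε • σ z),
          W.smul_mem _ (W.add_mem hzW (W.smul_mem _ hσz)), ?_⟩,
          ⟨ω⁻¹ • ((2:K)⁻¹ • (z - ε • σ z)),
          W.smul_mem _ (W.smul_mem _ (W.sub_mem hzW (W.smul_mem _ hσz))), ?_⟩),
          Subtype.ext ?_⟩
      · rw [hsmul, hadd, hsmul, hσσ, hc, hεq]
        match_scalars
        · linear_combination -(2:K)⁻¹ * hε2
        · ring1
      · rw [hsmul, hsmul, hsub, hsmul, hσσ, hc, hωinvq, hεq]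
        match_scalars
        all_goals first
          | ring1
          | linear_combination ω⁻¹ * (2:K)⁻¹ * hε2
          | linear_combination (-(ω⁻¹ * (2:K)⁻¹)) * hε2
      · simp only
        rw [smul_smul, mul_inv_cancel₀ hω0, one_smul]
        match_scalars <;> first | ring1 | (field_simp [h2]; try ring1; try norm_num)
  calc Nat.card {x : V // x ∈ W ∧ σ x = ε • x} ^ 2
      = Nat.card ({x : V // x ∈ W ∧ σ x = ε • x} × {x : V // x ∈ W ∧ σ x = ε • x}) := by
        rw [Nat.card_prod, sq]
    _ = Nat.card W := Nat.card_congr (Equiv.ofBijective _ key)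

lemma exists_omega {k : Type*} [Field k] [Fintype k] {q : ℕ} (hq2 : 2 ≤ q)
    (hcard : Fintype.card k = q ^ 2) (f : k →+* k) (hf : ∀ x, f x = x ^ q)
    (hff : ∀ x, f (f x) = x) : ∃ ω : k, ω ≠ 0 ∧ ω ^ q = -ω := by
  classical
  have hξ : ∃ ξ : k, ξ ^ q ≠ ξ := by
    by_contra h
    push_neg at h
    set P : Polynomial k := Polynomial.X ^ q - Polynomial.X with hP
    have hdeg : P.natDegree = q := by
      rw [hP, Polynomial.natDegree_sub_eq_left_of_natDegree_lt] <;>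
        simp [Polynomial.natDegree_X_pow, Polynomial.natDegree_X]
      omega
    have hP0 : P ≠ 0 := by
      intro h0
      rw [h0, Polynomial.natDegree_zero] at hdeg
      omega
    have hsub : (Finset.univ : Finset k) ⊆ P.roots.toFinset := by
      intro x _
      rw [Multiset.mem_toFinset, Polynomial.mem_roots hP0]
      simp [hP, Polynomial.IsRoot, h x]
    have hle : Fintype.card k ≤ q := by
      calc Fintype.card k = (Finset.univ : Finset k).card := rfl
        _ ≤ P.roots.toFinset.card := Finset.card_le_card hsub
        _ ≤ Multiset.card P.roots := Multiset.toFinset_card_le _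
        _ ≤ P.natDegree := Polynomial.card_roots' P
        _ = q := hdeg
    rw [hcard] at hle
    nlinarith
  obtain ⟨ξ, hξ⟩ := hξ
  refine ⟨ξ - ξ ^ q, sub_ne_zero.mpr (Ne.symm hξ), ?_⟩
  have h1 : (ξ - ξ ^ q) ^ q = f (ξ - f ξ) := by rw [hf (ξ - f ξ), hf ξ]
  rw [h1, map_sub, hff, hf]
  ring

/-- With `q = p^r` (`p` odd prime), `n` odd, `k = 𝔽_{q²}`, `l = 𝔽_{q^{2n}}`, `m_α` the
multiplication matrix of `α` in a fixed `k`-basis of `l`, where `l = k(α)` and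
`α^{q^n} = α⁻¹`: for each `ε = ±1` the set
`Ξ_ε(α) = {X ∈ M_n(k) | m_α·X·ᵗ(m̄_α) = X, ᵗX̄ = ε·X}` has exactly `q^n` elements. -/
theorem card_Xi_eps (p r q n : ℕ) (hp : p.Prime) (hodd : Odd p) (hr : 0 < r)
    (hq : q = p ^ r) (hn : Odd n) (hn0 : 0 < n)
    (k l : Type*) [Field k] [Fintype k] [Field l] [Fintype l] [Algebra k l]
    (hcardk : Fintype.card k = q ^ 2) (hcardl : Fintype.card l = q ^ (2 * n))
    (hdeg : Module.finrank k l = n)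
    (b : Module.Basis (Fin n) k l)
    (α : l) (hα0 : α ≠ 0) (hgen : Algebra.adjoin k {α} = ⊤)
    (hα : α ^ q ^ n = α⁻¹) :
    ∀ ε : k, ε = 1 ∨ ε = -1 →
      Nat.card {X : Matrix (Fin n) (Fin n) k |
          LinearMap.toMatrix b b (LinearMap.mulLeft k α) * X *
            ((LinearMap.toMatrix b b (LinearMap.mulLeft k α)).map (fun x => x ^ q))ᵀ = X ∧
          (X.map (fun x => x ^ q))ᵀ = ε • X}
        = q ^ n := by
  classical
  intro ε hε
  haveI := Fact.mk hp
  haveI : FiniteDimensional k l := Module.Finite.of_basis b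
  have hq2 : 2 ≤ q := by
    rw [hq]
    calc 2 ≤ p := hp.two_le
      _ ≤ p ^ r := Nat.le_self_pow (by omega) p
  haveI hck : CharP k p := by
    obtain ⟨m, hpc, hcard⟩ := FiniteField.card k (ringChar k)
    have hpr : p = ringChar k := by
      have hdvd : p ∣ ringChar k ^ (m : ℕ) := by
        rw [← hcard, hcardk, hq, ← pow_mul]
        exact dvd_pow_self p (by positivity)
      exact (Nat.prime_dvd_prime_iff_eq hp hpc).mp (hp.dvd_of_dvd_pow hdvd)
    rw [hpr]; infer_instance
  haveI hcl : CharP l p := charP_of_injective_algebraMap (algebraMap k l).injective p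
  -- Frobenius maps
  set f : k →+* k := iterateFrobenius k p r with hfdef
  have hfx : ∀ x : k, f x = x ^ q := fun x => by
    rw [hfdef, iterateFrobenius_def, hq]
  have hfq : (fun x : k => x ^ q) = ⇑f := funext fun x => (hfx x).symm
  have hk2 : ∀ x : k, x ^ q ^ 2 = x := fun x => by
    rw [← hcardk]; exact FiniteField.pow_card x
  have hff : ∀ x : k, f (f x) = x := fun x => by
    rw [hfx, hfx, ← pow_mul, ← pow_two, hk2]
  set F : l →+* l := iterateFrobenius l p (r * n) with hFdef
  have hFx : ∀ x : l, F x = x ^ q ^ n := fun x => by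
    rw [hFdef, iterateFrobenius_def, hq, ← pow_mul]
  have hFalg : ∀ c : k, F (algebraMap k l c) = algebraMap k l (c ^ q) := by
    intro c
    have h1 : (algebraMap k l c) ^ q ^ 2 = algebraMap k l c := by
      rw [← map_pow, hk2]
    rw [hFx, pow_q_odd _ q h1 hn, ← map_pow]
  have hFsmul : ∀ (c : k) (x : l), F (c • x) = (c ^ q) • F x := by
    intro c x
    rw [Algebra.smul_def, _root_.map_mul, hFalg, ← Algebra.smul_def]
  -- multiplication matrices
  set A := LinearMap.toMatrix b b (LinearMap.mulLeft k α) with hA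
  set B1 := (A.map (fun x => x ^ q))ᵀ with hB1
  set e : l → Matrix (Fin n) (Fin n) k :=
    fun β => LinearMap.toMatrix b b (LinearMap.mulLeft k β) with he
  have hAe : A = e α := rfl
  have hemul : ∀ β β' : l, e (β * β') = e β * e β' := by
    intro β β'
    rw [he]
    simp only
    rw [LinearMap.mulLeft_mul, LinearMap.toMatrix_comp b b b]
  have heone : e 1 = 1 := by
    rw [he]; simp only [LinearMap.mulLeft_one]; exact LinearMap.toMatrix_id b
  have heinj : Function.Injective e := by
    intro β β' hββ'
    have h1 := congrArg (Matrix.toLin b b) hββ'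
    rw [he] at h1
    simp only [Matrix.toLin_toMatrix] at h1
    have h2 := DFunLike.congr_fun h1 (1 : l)
    simpa [LinearMap.mulLeft_apply] using h2
  have hcom : ∀ β, A * e β = e β * A := fun β => by
    rw [hAe, ← hemul, ← hemul, mul_comm]
  have hAA' : A * e α⁻¹ = 1 := by rw [hAe, ← hemul, mul_inv_cancel₀ hα0, heone]
  have hA'A : e α⁻¹ * A = 1 := by rw [hAe, ← hemul, inv_mul_cancel₀ hα0, heone]
  -- bar on matrices
  set br : Matrix (Fin n) (Fin n) k → Matrix (Fin n) (Fin n) k := fun M => M.map f with hbr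
  have hbrmul : ∀ M N, br (M * N) = br M * br N := fun M N => Matrix.map_mul
  have hbrone : br 1 = 1 := Matrix.map_one f (map_zero f) (map_one f)
  have hB1br : B1 = (br A)ᵀ := by rw [hB1, hbr, hfq]
  set B1' := (br (e α⁻¹))ᵀ with hB1'
  have hBB' : B1 * B1' = 1 := by
    rw [hB1br, hB1', ← Matrix.transpose_mul, ← hbrmul, hA'A, hbrone, Matrix.transpose_one]
  have hB'B : B1' * B1 = 1 := by
    rw [hB1br, hB1', ← Matrix.transpose_mul, ← hbrmul, hAA', hbrone, Matrix.transpose_one]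
  -- trace form and dual basis
  have hnd := traceForm_nondegenerate k l
  set τ := Algebra.traceForm k l with hτ
  set γ : Module.Basis (Fin n) k l := τ.dualBasis hnd b with hγ
  have hdual : ∀ i j, τ (γ i) (b j) = if j = i then 1 else 0 := fun i j =>
    τ.apply_dualBasis_left hnd b i j
  have hrepr : ∀ (x : l) i, γ.repr x i = τ x (b i) := fun x i =>
    τ.dualBasis_repr_apply hnd b x i
  have hτsymm : ∀ x y : l, τ x y = τ y x := fun x y => by
    rw [hτ, Algebra.traceForm_apply, Algebra.traceForm_apply, mul_comm]
  have hAentry : ∀ i j, A i j = b.repr (α * b j) i := fun i j => by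
    rw [hA, LinearMap.toMatrix_apply, LinearMap.mulLeft_apply]
  have hαb : ∀ j, α * b j = ∑ s, A s j • b s := by
    intro j
    simp only [hAentry]
    exact (b.sum_repr _).symm
  have hαγ : ∀ i, α * γ i = ∑ j, A i j • γ j := by
    intro i
    apply γ.ext_elem
    intro j
    rw [hrepr]
    have h1 : τ (α * γ i) (b j) = τ (γ i) (α * b j) := by
      rw [hτ, Algebra.traceForm_apply, Algebra.traceForm_apply]
      ring_nf
    rw [h1, hαb]
    rw [map_sum]
    simp only [LinearMap.map_smul, smul_eq_mul, hdual]
    simp [Finset.sum_ite_eq]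
    simp [Finsupp.single_apply]
  -- the distinguished invertible fixed matrix X0
  set X0 : Matrix (Fin n) (Fin n) k := Matrix.of (fun i j => τ (γ i) (F (γ j))) with hX0
  have hX0app : ∀ i j, X0 i j = τ (γ i) (F (γ j)) := fun i j => rfl
  have hX0mem : A * X0 * B1 = X0 := by
    ext s t
    have hcalc : (A * X0 * B1) s t = ∑ j, (∑ i, A s i * X0 i j) * f (A t j) := by
      rw [Matrix.mul_apply]
      refine Finset.sum_congr rfl fun j _ => ?_
      rw [Matrix.mul_apply]
      congr 1
      rw [hB1br]
      rfl
    rw [hcalc]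
    have h1 : ∀ j, (∑ i, A s i * X0 i j) = τ (α * γ s) (F (γ j)) := by
      intro j
      rw [hαγ s, map_sum, LinearMap.sum_apply]
      refine Finset.sum_congr rfl fun i _ => ?_
      rw [LinearMap.map_smul, LinearMap.smul_apply, smul_eq_mul, hX0app]
    simp only [h1]
    have h3 : ∑ j, f (A t j) • F (γ j) = F (α * γ t) := by
      rw [hαγ t, map_sum]
      refine Finset.sum_congr rfl fun j _ => ?_
      rw [hFsmul, hfx]
    have h2 : τ (α * γ s) (F (α * γ t)) = ∑ j, τ (α * γ s) (F (γ j)) * f (A t j) := by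
      rw [← h3, map_sum]
      refine Finset.sum_congr rfl fun j _ => ?_
      rw [LinearMap.map_smul, smul_eq_mul]
      ring
    rw [← h2, _root_.map_mul F α (γ t), hFx α, hα, hX0app]
    rw [hτ, Algebra.traceForm_apply, Algebra.traceForm_apply]
    congr 1
    field_simp
  -- X0 is invertible
  have hX0det : X0.det ≠ 0 := by
    intro hdet
    obtain ⟨v, hv0, hv⟩ := (Matrix.exists_mulVec_eq_zero_iff).mpr hdet
    apply hv0
    set u : l := ∑ t, f (v t) • γ t with hu
    have hFu : F u = ∑ t, v t • F (γ t) := by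
      rw [hu, map_sum]
      refine Finset.sum_congr rfl fun t _ => ?_
      rw [hFsmul, ← hfx, hff]
    have hτu : ∀ s, τ (γ s) (F u) = 0 := by
      intro s
      rw [hFu, map_sum]
      have hvs : ∑ t', X0 s t' * v t' = 0 := by
        have h := congrFun hv s
        simpa [Matrix.mulVec, dotProduct] using h
      rw [← hvs]
      refine Finset.sum_congr rfl fun t _ => ?_
      rw [LinearMap.map_smul, smul_eq_mul, hX0app]
      ring
    have hFu0 : F u = 0 := by
      apply hnd.1
      intro x
      rw [hτsymm]
      conv_lhs => rw [← Module.Basis.sum_repr γ x]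
      rw [map_sum, LinearMap.sum_apply]
      refine Finset.sum_eq_zero fun s _ => ?_
      rw [LinearMap.map_smul, LinearMap.smul_apply, hτu, smul_zero]
    have hu0 : u = 0 := F.injective (by rw [hFu0, map_zero])
    funext t
    have h6 : f (v t) = 0 := by
      have h5 : γ.repr u t = 0 := by rw [hu0]; simp
      rw [hu] at h5
      simpa [Finsupp.single_apply, Finset.sum_ite_eq] using h5
    have := f.injective (by rw [h6, map_zero] : f (v t) = f 0)
    simpa using this
  have hX0unit : IsUnit X0.det := Ne.isUnit hX0det
  have hX0i1 : X0 * X0⁻¹ = 1 := Matrix.mul_nonsing_inv _ hX0unit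
  have hX0i2 : X0⁻¹ * X0 = 1 := Matrix.nonsing_inv_mul _ hX0unit
  -- commutant of A
  have hcomm2 : ∀ Y : Matrix (Fin n) (Fin n) k, Y * A = A * Y → ∃ β, Y = e β := by
    intro Y hY
    set g := Matrix.toLin b b Y with hg
    have hgα : ∀ x, g (α * x) = α * g x := by
      intro x
      have h1 := congrArg (Matrix.toLin b b) hY
      rw [Matrix.toLin_mul b b b, Matrix.toLin_mul b b b, hA, Matrix.toLin_toMatrix] at h1
      have h2 := DFunLike.congr_fun h1 x
      simpa [LinearMap.mulLeft_apply] using h2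
    have hall : ∀ x ∈ Algebra.adjoin k {α}, ∀ y, g (x * y) = x * g y := by
      intro x hx
      induction hx using Algebra.adjoin_induction with
      | mem z hz =>
        intro y
        rw [Set.mem_singleton_iff] at hz
        subst hz
        exact hgα y
      | algebraMap c =>
        intro y
        rw [← Algebra.smul_def, LinearMap.map_smul, Algebra.smul_def]
      | add x₁ x₂ hx₁ hx₂ h₁ h₂ =>
        intro y
        rw [add_mul, map_add, h₁ y, h₂ y, add_mul]
      | mul x₁ x₂ hx₁ hx₂ h₁ h₂ =>
        intro y
        rw [mul_assoc, h₁ (x₂ * y), h₂ y, mul_assoc]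
    refine ⟨g 1, ?_⟩
    have hgm : g = LinearMap.mulLeft k (g 1) := by
      apply LinearMap.ext
      intro x
      have hx : x ∈ Algebra.adjoin k {α} := by rw [hgen]; exact Algebra.mem_top
      have := hall x hx 1
      rw [mul_one] at this
      rw [LinearMap.mulLeft_apply, this, mul_comm]
    calc Y = LinearMap.toMatrix b b g := (LinearMap.toMatrix_toLin b b Y).symm
      _ = e (g 1) := by conv_lhs => rw [hgm]
  -- the submodule of fixed matrices
  set W : Submodule k (Matrix (Fin n) (Fin n) k) :=
    { carrier := {X | A * X * B1 = X}
      add_mem' := fun {X Y} hX hY => by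
        simp only [Set.mem_setOf_eq] at *
        rw [mul_add, add_mul, hX, hY]
      zero_mem' := by simp
      smul_mem' := fun c X hX => by
        simp only [Set.mem_setOf_eq] at *
        rw [mul_smul_comm, smul_mul_assoc, hX] } with hWdef
  have hmemW : ∀ X, X ∈ W ↔ A * X * B1 = X := fun X => Iff.rfl
  -- the bijection l ≃ W
  have hmem : ∀ β : l, e β * X0 ∈ W := by
    intro β
    rw [hmemW]
    have h1 : A * (e β * X0) = e β * (A * X0) := by
      rw [← mul_assoc, hcom β, mul_assoc]
    rw [h1, mul_assoc, hX0mem]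
  have hbij : Function.Bijective (fun β : l => (⟨e β * X0, hmem β⟩ : W)) := by
    constructor
    · intro β β' hββ'
      have h1 : e β * X0 = e β' * X0 := congrArg Subtype.val hββ'
      have h2 : e β = e β' := by
        have := congrArg (fun M => M * X0⁻¹) h1
        simpa [mul_assoc, hX0i1] using this
      exact heinj h2
    · rintro ⟨X, hX⟩
      rw [hmemW] at hX
      have hAX : A * X = X * B1' := by
        calc A * X = A * X * (B1 * B1') := by rw [hBB', mul_one]
          _ = (A * X * B1) * B1' := by rw [mul_assoc (A * X)]
          _ = X * B1' := by rw [hX]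
      have hX0B : X0 * B1' = A * X0 := by
        calc X0 * B1' = (A * X0 * B1) * B1' := by rw [hX0mem]
          _ = A * X0 * (B1 * B1') := by rw [mul_assoc (A * X0)]
          _ = A * X0 := by rw [hBB', mul_one]
      have hB'X0i : B1' * X0⁻¹ = X0⁻¹ * A := by
        calc B1' * X0⁻¹ = X0⁻¹ * (X0 * B1') * X0⁻¹ := by
              rw [← mul_assoc X0⁻¹ X0 B1', hX0i2, one_mul]
          _ = X0⁻¹ * (A * X0) * X0⁻¹ := by rw [hX0B]
          _ = X0⁻¹ * A := by
              simp only [mul_assoc]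
              rw [hX0i1, mul_one]
      have hcommY : (X * X0⁻¹) * A = A * (X * X0⁻¹) := by
        calc (X * X0⁻¹) * A = X * (X0⁻¹ * A) := by rw [mul_assoc]
          _ = X * (B1' * X0⁻¹) := by rw [hB'X0i]
          _ = (X * B1') * X0⁻¹ := by rw [mul_assoc]
          _ = (A * X) * X0⁻¹ := by rw [hAX]
          _ = A * (X * X0⁻¹) := by rw [mul_assoc]
      obtain ⟨β, hβ⟩ := hcomm2 _ hcommY
      refine ⟨β, Subtype.ext ?_⟩
      show e β * X0 = X
      rw [← hβ, mul_assoc, hX0i2, mul_one]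
  have hcardW : Nat.card W = q ^ (2 * n) := by
    rw [← Nat.card_congr (Equiv.ofBijective _ hbij), Nat.card_eq_fintype_card, hcardl]
  -- the semilinear involution
  set σ0 : Matrix (Fin n) (Fin n) k → Matrix (Fin n) (Fin n) k :=
    fun M => (M.map (fun x => x ^ q))ᵀ with hσ0
  have hσf : ∀ M, σ0 M = (br M)ᵀ := fun M => by rw [hσ0, hbr]; simp only [hfq]
  have hσadd : ∀ M N, σ0 (M + N) = σ0 M + σ0 N := by
    intro M N
    have hb : br (M + N) = br M + br N := Matrix.map_add f (map_add f) M N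
    rw [hσf, hσf, hσf, hb, Matrix.transpose_add]
  have hσsmul : ∀ (c : k) (M : Matrix (Fin n) (Fin n) k), σ0 (c • M) = c ^ q • σ0 M := by
    intro c M
    rw [hσ0]
    ext i j
    simp [Matrix.transpose_apply, Matrix.map_apply, Matrix.smul_apply, smul_eq_mul, mul_pow]
  have hσσ : ∀ M, σ0 (σ0 M) = M := by
    intro M
    rw [hσ0]
    ext i j
    simp only [Matrix.transpose_apply, Matrix.map_apply]
    rw [← pow_mul, ← pow_two, hk2]
  have hbrbr : ∀ M, br (br M) = M := by
    intro M
    rw [hbr]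
    simp only [Matrix.map_map]
    have : (⇑f ∘ ⇑f) = id := funext fun x => hff x
    rw [this, Matrix.map_id]
  have hWσ : ∀ X ∈ W, σ0 X ∈ W := by
    intro X hX
    rw [hmemW] at hX ⊢
    have h1 : br A * br X * br B1 = br X := by
      rw [← hbrmul, ← hbrmul, hX]
    rw [hB1br] at h1
    have h2 : br ((br A)ᵀ) = Aᵀ := by
      rw [hbr, ← Matrix.transpose_map]
      show (br (br A))ᵀ = Aᵀ
      rw [hbrbr]
    rw [h2] at h1
    have h3 := congrArg Matrix.transpose h1
    rw [Matrix.transpose_mul, Matrix.transpose_mul, Matrix.transpose_transpose] at h3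
    rw [hσf, hB1br]
    rw [← mul_assoc] at h3
    exact h3
  -- the element ω with ω^q = -ω
  have hqodd : Odd q := by rw [hq]; exact hodd.pow
  have hm1q : (-1 : k) ^ q = -1 := hqodd.neg_one_pow
  have h2ne : (2 : k) ≠ 0 := by
    intro h20
    have hdvd : (p : ℕ) ∣ 2 := by
      have : ((2 : ℕ) : k) = 0 := by exact_mod_cast h20
      exact (CharP.cast_eq_zero_iff k p 2).mp this
    have hp2 : p = 2 := (Nat.prime_dvd_prime_iff_eq hp Nat.prime_two).mp hdvd
    rw [hp2] at hodd
    exact (by norm_num : ¬ Odd 2) hodd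
  have h2q : (2 : k) ^ q = 2 := by rw [← hfx]; exact map_ofNat f 2
  obtain ⟨ω, hω0, hωq⟩ := exists_omega hq2 hcardk f hfx hff
  -- put everything together
  have hkey := card_eigen_sq W σ0 hσadd q hσsmul hσσ hWσ ε ω hε hm1q hω0 hωq h2ne h2q
  rw [hcardW] at hkey
  have hfinal : Nat.card {X : Matrix (Fin n) (Fin n) k |
      A * X * B1 = X ∧ (X.map (fun x => x ^ q))ᵀ = ε • X} =
      Nat.card {x : Matrix (Fin n) (Fin n) k // x ∈ W ∧ σ0 x = ε • x} :=
    Nat.card_congr (Equiv.subtypeEquivRight (fun X => Iff.rfl))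
  rw [hfinal]
  have hsq : Nat.card {x : Matrix (Fin n) (Fin n) k // x ∈ W ∧ σ0 x = ε • x} ^ 2
      = (q ^ n) ^ 2 := by
    rw [hkey, ← pow_mul, mul_comm n 2]
  exact Nat.pow_left_injective (by norm_num) hsq
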